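/- Write e^ε/(1−e^ε) = −1/ε + h(ε) where h is holomorphic near 0. Then h(0) = −1/2 and h'(0) = −1/12. Consequently the renormalised double zeta value at (0,0) obtained from the holomorphic projection of the Chen-cone exponential sum satisfies ζ(0,0) = −(3/2)h'(0) + h(0)² = 3/8. -/

import Mathlib

open Filter Real

lemma limA : Tendsto (fun x : ℝ => (Real.exp x - 1) / x) (nhdsWithin 0 {0}ᶜ) (nhds 1) := by
  have h := (Real.hasDerivAt_exp 0)
  rw [hasDerivAt_iff_tendsto_slope] at h
  simpa [slope_fun_def, Real.exp_zero, inv_mul_eq_div] using h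

lemma limB : Tendsto (fun x : ℝ => (Real.exp x - 1 - x) / x ^ 2) (nhdsWithin 0 {0}ᶜ)
    (nhds (1/2)) := by
  apply HasDerivAt.lhopital_zero_nhdsNE
      (f' := fun x : ℝ => Real.exp x - 1) (g' := fun x : ℝ => 2 * x)
  · filter_upwards with x
    simpa using ((Real.hasDerivAt_exp x).sub_const 1).fun_sub (hasDerivAt_id' (x := x))
  · filter_upwards with x
    simpa using (hasDerivAt_pow 2 x)
  · filter_upwards [self_mem_nhdsWithin] with x hx
    simpa using (hx : x ≠ 0)
  · apply tendsto_nhdsWithin_of_tendsto_nhds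
    have : Continuous fun x : ℝ => Real.exp x - 1 - x := by continuity
    simpa using this.tendsto 0
  · apply tendsto_nhdsWithin_of_tendsto_nhds
    have : Continuous fun x : ℝ => x ^ 2 := by continuity
    simpa using this.tendsto 0
  · have : ∀ x : ℝ, (Real.exp x - 1) / (2 * x) = ((Real.exp x - 1) / x) / 2 := by
      intro x; rw [mul_comm, ← div_div]
    simp only [this]
    have := limA.div_const 2
    norm_num at this ⊢
    exact this

lemma limC : Tendsto (fun x : ℝ => (Real.exp x - 1 - x - x ^ 2 / 2) / x ^ 3)
    (nhdsWithin 0 {0}ᶜ) (nhds (1/6)) := by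
  apply HasDerivAt.lhopital_zero_nhdsNE
      (f' := fun x : ℝ => Real.exp x - 1 - x) (g' := fun x : ℝ => 3 * x ^ 2)
  · filter_upwards with x
    have h1 : HasDerivAt (fun x : ℝ => x ^ 2 / 2) x x := by
      simpa using (hasDerivAt_pow 2 x).div_const 2
    simpa using (((Real.hasDerivAt_exp x).sub_const 1).fun_sub (hasDerivAt_id' (x := x))).fun_sub h1
  · filter_upwards with x
    simpa using (hasDerivAt_pow 3 x)
  · filter_upwards [self_mem_nhdsWithin] with x hx
    have : x ≠ 0 := hx
    positivity
  · apply tendsto_nhdsWithin_of_tendsto_nhds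
    have : Continuous fun x : ℝ => Real.exp x - 1 - x - x ^ 2 / 2 := by continuity
    simpa using this.tendsto 0
  · apply tendsto_nhdsWithin_of_tendsto_nhds
    have : Continuous fun x : ℝ => x ^ 3 := by continuity
    simpa using this.tendsto 0
  · have : ∀ x : ℝ, (Real.exp x - 1 - x) / (3 * x ^ 2)
        = ((Real.exp x - 1 - x) / x ^ 2) / 3 := by
      intro x; rw [mul_comm, ← div_div]
    simp only [this]
    have := limB.div_const 3
    norm_num at this ⊢
    exact this

theorem renormalised_zeta_zero_zero :
    Tendsto (fun ε : ℝ => Real.exp ε / (1 - Real.exp ε) + 1 / ε)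
      (nhdsWithin 0 {0}ᶜ) (nhds (-1/2)) ∧
    Tendsto (fun ε : ℝ => (Real.exp ε / (1 - Real.exp ε) + 1 / ε - (-1/2)) / ε)
      (nhdsWithin 0 {0}ᶜ) (nhds (-1/12)) ∧
    (∀ a₁ a₂ : ℝ, a₁ ≠ 0 → a₁ + a₂ ≠ 0 →
      -(((a₁ + a₂) - a₂) / a₁) * (-1/12 : ℝ)
        - ((a₁ - (a₁ - a₂) / 2) / (a₁ + a₂)) * (-1/12)
        + (-1/2 : ℝ) ^ 2 = 3/8) ∧
    (-(3/2 : ℝ)) * (-1/12) + (-1/2 : ℝ) ^ 2 = 3/8 := by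
  have hne : ∀ᶠ ε : ℝ in nhdsWithin 0 {0}ᶜ, ε ≠ 0 := by
    filter_upwards [self_mem_nhdsWithin] with x hx; exact hx
  refine ⟨?_, ?_, ?_, by norm_num⟩
  · have hlim : Tendsto
        (fun ε : ℝ => ((Real.exp ε - 1) / ε - (Real.exp ε - 1 - ε) / ε ^ 2)
          / (-((Real.exp ε - 1) / ε))) (nhdsWithin 0 {0}ᶜ) (nhds (-1/2)) := by
      have h : Tendsto
          (fun ε : ℝ => ((Real.exp ε - 1) / ε - (Real.exp ε - 1 - ε) / ε ^ 2)
            / (-((Real.exp ε - 1) / ε))) (nhdsWithin 0 {0}ᶜ)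
          (nhds (((1:ℝ) - 1/2) / (-1))) :=
        (limA.sub limB).div limA.neg (by norm_num)
      norm_num at h
      convert h using 2
      norm_num
    refine hlim.congr' ?_
    filter_upwards [hne] with ε hε
    have he1 : Real.exp ε ≠ 1 := fun h => hε (by
      rwa [← Real.exp_zero, Real.exp_eq_exp] at h)
    have hd : 1 - Real.exp ε ≠ 0 := by
      intro h; apply he1; linarith
    field_simp
    ring
  · have hlin : Tendsto (fun ε : ℝ => ε / 2 - 1) (nhdsWithin 0 {0}ᶜ) (nhds (-1)) := by
      apply tendsto_nhdsWithin_of_tendsto_nhds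
      have : Continuous fun ε : ℝ => ε / 2 - 1 := by continuity
      simpa using this.tendsto 0
    have hlim : Tendsto
        (fun ε : ℝ => (1/4 + (ε / 2 - 1) * ((Real.exp ε - 1 - ε - ε ^ 2 / 2) / ε ^ 3))
          / (-((Real.exp ε - 1) / ε))) (nhdsWithin 0 {0}ᶜ) (nhds (-1/12)) := by
      have h : Tendsto
          (fun ε : ℝ => (1/4 + (ε / 2 - 1) * ((Real.exp ε - 1 - ε - ε ^ 2 / 2) / ε ^ 3))
            / (-((Real.exp ε - 1) / ε))) (nhdsWithin 0 {0}ᶜ)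
          (nhds (((1:ℝ)/4 + (-1) * (1/6)) / (-1))) :=
        (tendsto_const_nhds.add (hlin.mul limC)).div limA.neg (by norm_num)
      norm_num at h
      convert h using 2
      norm_num
    refine hlim.congr' ?_
    filter_upwards [hne] with ε hε
    have he1 : Real.exp ε ≠ 1 := fun h => hε (by
      rwa [← Real.exp_zero, Real.exp_eq_exp] at h)
    have hd : 1 - Real.exp ε ≠ 0 := by
      intro h; apply he1; linarith
    field_simp
    ring
  · intro a₁ a₂ h1 h12
    field_simp
    ring
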